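/- Let a ≥ 0 and for each j ≥ 1 set λ_j = (jπ)² and define P_j f := f''' - (λ_j - a) f' for f ∈ H³(-1,0). Then there exists a constant C₁ ≥ 1 such that for all n ∈ ℕ, all j ≥ 1, and all f ∈ H^{3n}(-1,0): ‖f‖²_{H^{2n}(-1,0)} ≤ C₁ⁿ ∑_{i=0}^{n} λ_j^{2n-2i} ‖P_j^i f‖²_{L²(-1,0)}. -/

import Mathlib

set_option maxHeartbeats 1000000
open MeasureTheory Finset Real intervalIntegral Set
lemma my_cs {u v : ℝ → ℝ} (hu : Continuous u) (hv : Continuous v) {c d : ℝ} (hcd : c ≤ d) :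
    ∫ x in c..d, |u x * v x| ≤
      Real.sqrt (∫ x in c..d, (u x)^2) * Real.sqrt (∫ x in c..d, (v x)^2) := by
  set a := ∫ x in c..d, (u x)^2 with ha
  set b := ∫ x in c..d, (v x)^2 with hb
  set I := ∫ x in c..d, |u x * v x| with hI
  have hIa : (0:ℝ) ≤ a := intervalIntegral.integral_nonneg hcd (fun x _ => sq_nonneg _)
  have hIb : (0:ℝ) ≤ b := intervalIntegral.integral_nonneg hcd (fun x _ => sq_nonneg _)
  have hII : (0:ℝ) ≤ I := intervalIntegral.integral_nonneg hcd (fun x _ => abs_nonneg _)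
  have key : ∀ t : ℝ, 0 ≤ b * (t*t) + (-2*I) * t + a := by
    intro t
    have hint : ∀ x, (|u x| - t * |v x|)^2
        = t^2 * (v x)^2 + (-2*t) * |u x * v x| + (u x)^2 := by
      intro x
      rw [abs_mul]
      ring_nf
      rw [sq_abs, sq_abs]
      ring
    have h1 : (0:ℝ) ≤ ∫ x in c..d, (|u x| - t * |v x|)^2 :=
      intervalIntegral.integral_nonneg hcd (fun x _ => sq_nonneg _)
    have h2 : (∫ x in c..d, (|u x| - t * |v x|)^2)
        = t^2 * b + (-2*t) * I + a := by
      simp_rw [hint]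
      rw [intervalIntegral.integral_add, intervalIntegral.integral_add,
        intervalIntegral.integral_const_mul, intervalIntegral.integral_const_mul]
      · exact (continuous_const.mul (hv.pow 2)).intervalIntegrable _ _
      · exact (continuous_const.mul ((hu.mul hv).abs)).intervalIntegrable _ _
      · exact ((continuous_const.mul (hv.pow 2)).add (continuous_const.mul ((hu.mul hv).abs))).intervalIntegrable _ _
      · exact (hu.pow 2).intervalIntegrable _ _
    nlinarith [h1, h2]
  have hd := discrim_le_zero key
  rw [discrim] at hd
  have hI2 : I^2 ≤ a * b := by nlinarith
  calc I ≤ Real.sqrt (a*b) := by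
        rw [show I = Real.sqrt (I^2) by rw [Real.sqrt_sq hII]]
        exact Real.sqrt_le_sqrt hI2
    _ = Real.sqrt a * Real.sqrt b := Real.sqrt_mul hIa b


lemma quad_root_bound {t α s : ℝ} (ht : 0 ≤ t) (hα : 0 ≤ α) (hs : 0 ≤ s)
    (h : t^2 ≤ α*t + s^2) : t ≤ α + s := by nlinarith

lemma sq_ftc_bound {p q : ℝ → ℝ} (hp : Continuous p) (hq : Continuous q)
    (hpq : ∀ x, HasDerivAt p (q x) x) {c d : ℝ} (hcd : c ≤ d)
    {s y : ℝ} (hs : s ∈ Set.Icc c d) (hy : y ∈ Set.Icc c d) :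
    p y ^2 ≤ p s ^2 + 2*(Real.sqrt (∫ x in c..d, (p x)^2) * Real.sqrt (∫ x in c..d, (q x)^2)) := by
  have hftc : ∫ x in s..y, ((2:ℕ) * p x ^ 1 * q x) = p y ^2 - p s ^2 := by
    apply intervalIntegral.integral_eq_sub_of_hasDerivAt
    · exact fun x _ => (hpq x).pow 2
    · exact ((continuous_const.mul (hp.pow 1)).mul hq).intervalIntegrable _ _
  have habs : |∫ x in s..y, ((2:ℕ) * p x ^ 1 * q x)| ≤ 2 * ∫ x in c..d, |p x * q x| := by
    have h1 : |∫ x in s..y, ((2:ℕ) * p x ^ 1 * q x)| = 2 * |∫ x in s..y, (p x * q x)| := by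
      have : ∀ x, ((2:ℕ):ℝ) * p x ^ 1 * q x = 2 * (p x * q x) := by intro x; push_cast; ring
      simp_rw [this]
      rw [intervalIntegral.integral_const_mul, abs_mul]
      norm_num
    rw [h1]
    have h2 : |∫ x in s..y, (p x * q x)| ≤ abs (∫ x in s..y, |p x * q x|) := by
      simpa only [Real.norm_eq_abs] using
        intervalIntegral.norm_integral_le_abs_integral_norm (f := fun x => p x * q x)
    have h3 : abs (∫ x in s..y, |p x * q x|) ≤ abs (∫ x in c..d, |p x * q x|) := by
      apply intervalIntegral.abs_integral_mono_interval
      · apply Set.uIoc_subset_uIoc_of_uIcc_subset_uIcc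
        apply Set.uIcc_subset_uIcc <;> simp [Set.uIcc_of_le hcd, hs, hy]
      · exact Filter.Eventually.of_forall (fun x => abs_nonneg _)
      · exact ((hp.mul hq).abs).intervalIntegrable _ _
    have h4 : abs (∫ x in c..d, |p x * q x|) = ∫ x in c..d, |p x * q x| :=
      abs_of_nonneg (intervalIntegral.integral_nonneg hcd (fun x _ => abs_nonneg _))
    linarith
  have hcs := my_cs hp hq hcd
  have : p y ^2 - p s ^2 ≤ 2 * ∫ x in c..d, |p x * q x| := by
    rw [← hftc]
    exact (le_abs_self _).trans habs
  linarith


lemma interp_arith {A B E l fc fd : ℝ} (hA0 : 0 ≤ A) (hB0 : 0 ≤ B) (hE0 : 0 ≤ E) (hl0 : 0 < l)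
    (hc : l * fc^2 ≤ A + 2*l*(Real.sqrt A*Real.sqrt B))
    (hd : l * fd^2 ≤ A + 2*l*(Real.sqrt A*Real.sqrt B))
    (hB : B ≤ l * (((fd - fc)/l)^2 + 2*(Real.sqrt B*Real.sqrt E))) :
    B ≤ 200/l^2*A + 8*l^2*E := by
  have h1 : (Real.sqrt B)^2 = B := Real.sq_sqrt hB0
  have h2 : (Real.sqrt A)^2 = A := Real.sq_sqrt hA0
  have h3 : (Real.sqrt E)^2 = E := Real.sq_sqrt hE0
  have sA := Real.sqrt_nonneg A
  have sB := Real.sqrt_nonneg B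
  have sE := Real.sqrt_nonneg E
  have hstep1 : l * ((fd - fc)/l)^2 ≤ 4*A/l^2 + (8*Real.sqrt A/l)*Real.sqrt B := by
    have e1 : l * ((fd - fc)/l)^2 = (fd - fc)^2/l := by field_simp
    have e2 : (fd - fc)^2 ≤ 2*fc^2 + 2*fd^2 := by nlinarith [sq_nonneg (fd + fc)]
    have e3 : l*(fc^2 + fd^2) ≤ 2*A + 4*l*(Real.sqrt A*Real.sqrt B) := by linarith
    rw [e1]
    have e6 : (fd - fc)^2 * l ≤ 4*A + 8*l*(Real.sqrt A*Real.sqrt B) := by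
      nlinarith [mul_le_mul_of_nonneg_left e2 hl0.le]
    have e7 : (fd - fc)^2/l = ((fd-fc)^2*l)/l^2 := by field_simp
    have e8 : 4*A/l^2 + 8*Real.sqrt A/l*Real.sqrt B = (4*A + 8*l*(Real.sqrt A*Real.sqrt B))/l^2 := by
      field_simp
    rw [e7, e8]
    exact div_le_div_of_nonneg_right e6 (by positivity)
  have hkey : B ≤ 4*A/l^2 + (8*Real.sqrt A/l + 2*l*Real.sqrt E)*Real.sqrt B := by
    have expand : (8*Real.sqrt A/l + 2*l*Real.sqrt E)*Real.sqrt B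
        = (8*Real.sqrt A/l)*Real.sqrt B + l*(2*(Real.sqrt B*Real.sqrt E)) := by ring
    linarith [hB, hstep1, mul_le_mul_of_nonneg_left hstep1 (le_refl (0:ℝ))]
  have ht : Real.sqrt B ≤ (8*Real.sqrt A/l + 2*l*Real.sqrt E) + 2*Real.sqrt A/l := by
    apply quad_root_bound sB (by positivity) (by positivity)
    have h5 : (2*Real.sqrt A/l)^2 = 4*A/l^2 := by
      rw [div_pow, mul_pow, h2]; norm_num
    linarith [hkey, h1, h5]
  have hle : Real.sqrt B ≤ 10*Real.sqrt A/l + 2*l*Real.sqrt E := by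
    have : 8*Real.sqrt A/l + 2*Real.sqrt A/l = 10*Real.sqrt A/l := by ring
    linarith
  have hsq : B ≤ (10*Real.sqrt A/l + 2*l*Real.sqrt E)^2 := by
    rw [← h1]; exact pow_le_pow_left₀ sB hle 2
  have e4 : (10*Real.sqrt A/l)^2 = 100*A/l^2 := by rw [div_pow, mul_pow, h2]; norm_num
  have e5 : (2*l*Real.sqrt E)^2 = 4*l^2*E := by rw [mul_pow, mul_pow, h3]; norm_num
  have e9 : 200/l^2*A = 2*(100*A/l^2) := by ring
  have e10 : (10*Real.sqrt A/l + 2*l*Real.sqrt E)^2 + (10*Real.sqrt A/l - 2*l*Real.sqrt E)^2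
      = 2*(10*Real.sqrt A/l)^2 + 2*(2*l*Real.sqrt E)^2 := by ring
  linarith [hsq, sq_nonneg (10*Real.sqrt A/l - 2*l*Real.sqrt E), e4, e5, e9, e10]

lemma interp_local {f u w : ℝ → ℝ} (hf : Continuous f) (hu : Continuous u) (hw : Continuous w)
    (hfu : ∀ x, HasDerivAt f (u x) x) (huw : ∀ x, HasDerivAt u (w x) x)
    {c d : ℝ} (hcd : c < d) :
    ∫ x in c..d, (u x)^2 ≤ 200/(d-c)^2 * (∫ x in c..d, (f x)^2)
      + 8*(d-c)^2 * (∫ x in c..d, (w x)^2) := by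
  have hA0 : 0 ≤ ∫ x in c..d, (f x)^2 :=
    intervalIntegral.integral_nonneg hcd.le (fun x _ => sq_nonneg _)
  have hB0 : 0 ≤ ∫ x in c..d, (u x)^2 :=
    intervalIntegral.integral_nonneg hcd.le (fun x _ => sq_nonneg _)
  have hE0 : 0 ≤ ∫ x in c..d, (w x)^2 :=
    intervalIntegral.integral_nonneg hcd.le (fun x _ => sq_nonneg _)
  have hl0 : (0:ℝ) < d - c := by linarith
  obtain ⟨ξ, hξ, hξval⟩ := exists_hasDerivAt_eq_slope f u hcd hf.continuousOn (fun x _ => hfu x)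
  have hξmem : ξ ∈ Set.Icc c d := Set.mem_Icc_of_Ioo hξ
  have hend : ∀ t ∈ Set.Icc c d, (d-c) * (f t)^2 ≤ (∫ x in c..d, (f x)^2)
      + 2*(d-c)*(Real.sqrt (∫ x in c..d, (f x)^2) * Real.sqrt (∫ x in c..d, (u x)^2)) := by
    intro t ht
    have hmono : ∫ x in c..d, ((f t)^2
        - 2*(Real.sqrt (∫ x in c..d, (f x)^2) * Real.sqrt (∫ x in c..d, (u x)^2)))
        ≤ ∫ x in c..d, (f x)^2 := by
      apply intervalIntegral.integral_mono_on hcd.le intervalIntegrable_const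
        ((hf.pow 2).intervalIntegrable _ _)
      intro s hsm
      have := sq_ftc_bound hf hu hfu hcd.le hsm ht
      simp only [Pi.pow_apply]
      linarith
    rw [intervalIntegral.integral_const, smul_eq_mul] at hmono
    nlinarith [hmono]
  have humain : (∫ x in c..d, (u x)^2) ≤ (d-c) * ((u ξ)^2
      + 2*(Real.sqrt (∫ x in c..d, (u x)^2) * Real.sqrt (∫ x in c..d, (w x)^2))) := by
    have hmono : (∫ x in c..d, (u x)^2) ≤ ∫ x in c..d, ((u ξ)^2
        + 2*(Real.sqrt (∫ x in c..d, (u x)^2) * Real.sqrt (∫ x in c..d, (w x)^2))) := by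
      apply intervalIntegral.integral_mono_on hcd.le
        ((hu.pow 2).intervalIntegrable _ _) intervalIntegrable_const
      exact fun x hx => sq_ftc_bound hu hw huw hcd.le hξmem hx
    rw [intervalIntegral.integral_const, smul_eq_mul] at hmono
    linarith
  have := interp_arith hA0 hB0 hE0 hl0 (hend c ⟨le_refl c, hcd.le⟩) (hend d ⟨hcd.le, le_refl d⟩)
    (by rw [← hξval] at *; convert humain using 3)
  calc (∫ x in c..d, (u x)^2)
      ≤ 200/(d-c)^2*(∫ x in c..d, (f x)^2) + 8*(d-c)^2*(∫ x in c..d, (w x)^2) := this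
    _ = _ := by ring

lemma interp_global {f u w : ℝ → ℝ} (hf : Continuous f) (hu : Continuous u) (hw : Continuous w)
    (hfu : ∀ x, HasDerivAt f (u x) x) (huw : ∀ x, HasDerivAt u (w x) x)
    {N : ℕ} (hN : 1 ≤ N) :
    ∫ x in (-1:ℝ)..0, (u x)^2 ≤ 200*N^2 * (∫ x in (-1:ℝ)..0, (f x)^2)
      + 8/N^2 * (∫ x in (-1:ℝ)..0, (w x)^2) := by
  have hN0 : (0:ℝ) < N := by exact_mod_cast hN
  obtain ⟨P, hP⟩ : ∃ P : ℕ → ℝ, P = fun (k:ℕ) => -1 + (k:ℝ)/(N:ℝ) := ⟨_, rfl⟩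
  have hlen : ∀ k : ℕ, P (k+1) - P k = 1/N := by
    intro k; simp only [hP]; push_cast; field_simp; ring
  have hlt : ∀ k : ℕ, P k < P (k+1) := by
    intro k
    have h1 := hlen k
    have h2 : (0:ℝ) < 1/N := by positivity
    linarith
  have hP0 : P 0 = -1 := by simp [hP]
  have hPN : P N = 0 := by simp only [hP]; field_simp; norm_num
  have hsum : ∀ g : ℝ → ℝ, Continuous g →
      ∑ k ∈ Finset.range N, ∫ x in P k..P (k+1), (g x)^2 = ∫ x in (-1:ℝ)..0, (g x)^2 := by
    intro g hg
    have := intervalIntegral.sum_integral_adjacent_intervals (μ := volume) (a := P) (n := N)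
      (f := fun x => (g x)^2) (fun k _ => (hg.pow 2).intervalIntegrable _ _)
    rw [hP0, hPN] at this
    exact this
  have hpiece : ∀ k ∈ Finset.range N,
      (∫ x in P k..P (k+1), (u x)^2) ≤ 200*N^2 * (∫ x in P k..P (k+1), (f x)^2)
        + 8/N^2 * (∫ x in P k..P (k+1), (w x)^2) := by
    intro k _
    have h := interp_local hf hu hw hfu huw (hlt k)
    rw [hlen k] at h
    have e1 : 200/(1/(N:ℝ))^2 = 200*N^2 := by field_simp
    have e2 : 8*(1/(N:ℝ))^2 = 8/N^2 := by field_simp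
    rw [e1, e2] at h
    exact h
  calc ∫ x in (-1:ℝ)..0, (u x)^2 = ∑ k ∈ Finset.range N, ∫ x in P k..P (k+1), (u x)^2 :=
        (hsum u hu).symm
    _ ≤ ∑ k ∈ Finset.range N, (200*N^2 * (∫ x in P k..P (k+1), (f x)^2)
        + 8/N^2 * (∫ x in P k..P (k+1), (w x)^2)) := Finset.sum_le_sum hpiece
    _ = 200*N^2 * (∑ k ∈ Finset.range N, ∫ x in P k..P (k+1), (f x)^2)
        + 8/N^2 * (∑ k ∈ Finset.range N, ∫ x in P k..P (k+1), (w x)^2) := by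
        rw [Finset.sum_add_distrib, Finset.mul_sum, Finset.mul_sum]
    _ = _ := by rw [hsum f hf, hsum w hw]

lemma ceil_sqrt_bounds {x : ℝ} (hx : 9 ≤ x) :
    ∃ M : ℕ, 1 ≤ M ∧ x ≤ (M:ℝ)^2 ∧ (M:ℝ)^2 ≤ 2*x := by
  refine ⟨⌈Real.sqrt x⌉₊, ?_, ?_, ?_⟩
  · have h3 : (3:ℝ) ≤ Real.sqrt x := by
      rw [show (3:ℝ) = Real.sqrt 9 by rw [show (9:ℝ) = 3^2 by norm_num, Real.sqrt_sq]; norm_num]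
      exact Real.sqrt_le_sqrt hx
    have : (1:ℝ) ≤ ⌈Real.sqrt x⌉₊ := le_trans (by norm_num) ((Nat.le_ceil _).trans' h3)
    exact_mod_cast Nat.one_le_cast.mp (by exact_mod_cast this)
  · have h1 : Real.sqrt x ≤ (⌈Real.sqrt x⌉₊ : ℝ) := Nat.le_ceil _
    have h2 : Real.sqrt x ^ 2 = x := Real.sq_sqrt (by linarith)
    nlinarith [Real.sqrt_nonneg x]
  · have h3 : (3:ℝ) ≤ Real.sqrt x := by
      rw [show (3:ℝ) = Real.sqrt 9 by rw [show (9:ℝ) = 3^2 by norm_num, Real.sqrt_sq]; norm_num]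
      exact Real.sqrt_le_sqrt hx
    have h1 : (⌈Real.sqrt x⌉₊ : ℝ) < Real.sqrt x + 1 :=
      Nat.ceil_lt_add_one (Real.sqrt_nonneg x)
    have h2 : Real.sqrt x ^ 2 = x := Real.sq_sqrt (by linarith)
    nlinarith

lemma base_arith {A0 A1 A2 A3 G lam β : ℝ}
    (h0 : 0 ≤ A0) (h1 : 0 ≤ A1) (h2 : 0 ≤ A2) (h3 : 0 ≤ A3) (hG : 0 ≤ G)
    (hβ : 1 ≤ β) (hlam : 9 ≤ lam)
    (hi : ∀ N : ℕ, 1 ≤ N → (N:ℝ)^2*A1 ≤ 200*(N:ℝ)^4*A0 + 8*A2)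
    (hii : ∀ M : ℕ, 1 ≤ M → (M:ℝ)^2*A2 ≤ 200*(M:ℝ)^4*A1 + 8*A3)
    (hiii : A3 ≤ 2*G + 2*β*lam^2*A1) :
    A0 + A1 + A2 ≤ (10^11*β^2) * (lam^2*A0 + G) := by
  obtain ⟨c, hc⟩ : ∃ c : ℝ, c = 816*β := ⟨_, rfl⟩
  have hc1 : (816:ℝ) ≤ c := by rw [hc]; nlinarith
  have hcpos : (0:ℝ) < c := by linarith
  have hlam0 : (0:ℝ) < lam := by linarith
  obtain ⟨M, hM1, hMl, hMu⟩ := ceil_sqrt_bounds hlam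
  have hstar : lam*A2 ≤ c*lam^2*A1 + 16*G := by
    have h := hii M hM1
    have e1 : lam*A2 ≤ (M:ℝ)^2*A2 := by nlinarith
    have hM4 : (M:ℝ)^4 ≤ 4*lam^2 := by
      have := mul_le_mul hMu hMu (sq_nonneg (M:ℝ)) (by positivity)
      nlinarith
    have e2 : 200*(M:ℝ)^4*A1 ≤ 800*lam^2*A1 := by
      nlinarith [mul_le_mul_of_nonneg_right hM4 h1]
    have e5 : 800*lam^2*A1 + 16*β*lam^2*A1 ≤ c*lam^2*A1 := by
      rw [hc]; nlinarith [mul_nonneg (sq_nonneg lam) h1]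
    linarith
  obtain ⟨N, hN1, hNl, hNu⟩ := ceil_sqrt_bounds (show (9:ℝ) ≤ 16*c*lam by nlinarith)
  have hstar2 : c*lam^2*A1 ≤ 25600*c^2*lam^3*A0 + 16*G := by
    have h := hi N hN1
    have e1 : 16*c*lam*A1 ≤ (N:ℝ)^2*A1 := by nlinarith
    have hN4 : (N:ℝ)^4 ≤ 1024*c^2*lam^2 := by
      have := mul_le_mul hNu hNu (sq_nonneg (N:ℝ)) (by positivity)
      nlinarith
    have e2 : 200*(N:ℝ)^4*A0 ≤ 204800*c^2*lam^2*A0 := by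
      nlinarith [mul_le_mul_of_nonneg_right hN4 h0]
    have e3 : 16*c*lam*A1 ≤ 204800*c^2*lam^2*A0 + 8*A2 := by linarith
    have e4 : 16*c*lam^2*A1 ≤ 204800*c^2*lam^3*A0 + 8*(lam*A2) := by
      have m := mul_le_mul_of_nonneg_left e3 hlam0.le
      have r1 : lam*(16*c*lam*A1) = 16*c*lam^2*A1 := by ring
      have r2 : lam*(204800*c^2*lam^2*A0 + 8*A2) = 204800*c^2*lam^3*A0 + 8*(lam*A2) := by ring
      rw [r1, r2] at m
      exact m
    linarith
  have hclam : (16:ℝ) ≤ c*lam^2 := by nlinarith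
  have hA1 : A1 ≤ 25600*c*lam*A0 + G := by
    have e6 : c*lam^2*(25600*c*lam*A0 + G) = 25600*c^2*lam^3*A0 + c*lam^2*G := by ring
    have e7 : 16*G ≤ c*lam^2*G := by nlinarith [mul_le_mul_of_nonneg_right hclam hG]
    have key : c*lam^2*A1 ≤ c*lam^2*(25600*c*lam*A0 + G) := by linarith
    exact le_of_mul_le_mul_left key (by positivity)
  have hA2 : A2 ≤ 25600*c^2*lam^2*A0 + 4*G := by
    have e6 : lam*(25600*c^2*lam^2*A0 + 4*G) = 25600*c^2*lam^3*A0 + 4*(lam*G) := by ring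
    have e7 : 32*G ≤ 4*(lam*G) := by nlinarith [mul_le_mul_of_nonneg_right hlam hG]
    have key : lam*A2 ≤ lam*(25600*c^2*lam^2*A0 + 4*G) := by linarith
    exact le_of_mul_le_mul_left key hlam0
  have p0 : (1:ℝ) ≤ c^2*lam^2 := by nlinarith
  have p1 : A0 ≤ c^2*lam^2*A0 := by nlinarith [mul_le_mul_of_nonneg_right p0 h0]
  have p2 : 25600*c*lam*A0 ≤ 25600*c^2*lam^2*A0 := by
    have : c*lam ≤ c^2*lam^2 := by nlinarith
    nlinarith [mul_le_mul_of_nonneg_right this h0]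
  have hfin : A0 + A1 + A2 ≤ 76801*c^2*(lam^2*A0) + 6*G := by nlinarith
  have hA0l : (0:ℝ) ≤ lam^2*A0 := by positivity
  have hβ2 : (1:ℝ) ≤ β^2 := by nlinarith
  have q1 : 76801*c^2 ≤ 10^11*β^2 := by rw [hc]; nlinarith
  have q2 : (6:ℝ) ≤ 10^11*β^2 := by nlinarith
  calc A0 + A1 + A2 ≤ 76801*c^2*(lam^2*A0) + 6*G := hfin
    _ ≤ 10^11*β^2*(lam^2*A0) + 10^11*β^2*G := by
        nlinarith [mul_le_mul_of_nonneg_right q1 hA0l, mul_le_mul_of_nonneg_right q2 hG]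
    _ = (10^11*β^2)*(lam^2*A0 + G) := by ring

lemma base_case {a lam : ℝ} (ha : 0 ≤ a) (hlam : 9 ≤ lam) {f : ℝ → ℝ} (hf : ContDiff ℝ 3 f) :
    (∫ x in (-1:ℝ)..0, (iteratedDeriv 0 f x)^2) + (∫ x in (-1:ℝ)..0, (iteratedDeriv 1 f x)^2)
      + (∫ x in (-1:ℝ)..0, (iteratedDeriv 2 f x)^2)
    ≤ (10^11*((1+a)^2)^2) * (lam^2*(∫ x in (-1:ℝ)..0, (iteratedDeriv 0 f x)^2)
        + ∫ x in (-1:ℝ)..0, (iteratedDeriv 3 f x - (lam - a) * deriv f x)^2) := by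
  have cont : ∀ m : ℕ, m ≤ 3 → Continuous (iteratedDeriv m f) := by
    intro m hm
    exact hf.continuous_iteratedDeriv m (by exact_mod_cast hm)
  have hder : ∀ m : ℕ, m < 3 → ∀ x, HasDerivAt (iteratedDeriv m f) (iteratedDeriv (m+1) f x) x := by
    intro m hm x
    rw [iteratedDeriv_succ]
    exact ((hf.differentiable_iteratedDeriv m (by exact_mod_cast hm)) x).hasDerivAt
  have hg : Continuous (fun x => iteratedDeriv 3 f x - (lam - a) * deriv f x) := by
    exact (cont 3 le_rfl).sub (continuous_const.mul (hf.continuous_deriv (by norm_num)))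
  have hnn : ∀ m : ℕ, m ≤ 3 → 0 ≤ ∫ x in (-1:ℝ)..0, (iteratedDeriv m f x)^2 := by
    intro m hm
    exact intervalIntegral.integral_nonneg (by norm_num) (fun x _ => sq_nonneg _)
  have hGnn : 0 ≤ ∫ x in (-1:ℝ)..0, (iteratedDeriv 3 f x - (lam - a) * deriv f x)^2 :=
    intervalIntegral.integral_nonneg (by norm_num) (fun x _ => sq_nonneg _)
  -- the two interpolation inequalities in multiplied form
  have hscale : ∀ (p u w : ℝ → ℝ), Continuous p → Continuous u → Continuous w →
      (∀ x, HasDerivAt p (u x) x) → (∀ x, HasDerivAt u (w x) x) →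
      ∀ N : ℕ, 1 ≤ N → (N:ℝ)^2*(∫ x in (-1:ℝ)..0, (u x)^2)
        ≤ 200*(N:ℝ)^4*(∫ x in (-1:ℝ)..0, (p x)^2) + 8*(∫ x in (-1:ℝ)..0, (w x)^2) := by
    intro p u w hp hu hw hpu huw N hN
    have hN0 : (0:ℝ) < (N:ℝ)^2 := by positivity
    have h := interp_global hp hu hw hpu huw hN
    have m := mul_le_mul_of_nonneg_left h hN0.le
    have r : (N:ℝ)^2*(200*N^2*(∫ x in (-1:ℝ)..0, (p x)^2) + 8/N^2*(∫ x in (-1:ℝ)..0, (w x)^2))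
        = 200*(N:ℝ)^4*(∫ x in (-1:ℝ)..0, (p x)^2) + 8*(∫ x in (-1:ℝ)..0, (w x)^2) := by
      field_simp
    rw [r] at m
    exact m
  have hi := hscale (iteratedDeriv 0 f) (iteratedDeriv 1 f) (iteratedDeriv 2 f)
    (cont 0 (by norm_num)) (cont 1 (by norm_num)) (cont 2 (by norm_num))
    (hder 0 (by norm_num)) (hder 1 (by norm_num))
  have hii := hscale (iteratedDeriv 1 f) (iteratedDeriv 2 f) (iteratedDeriv 3 f)
    (cont 1 (by norm_num)) (cont 2 (by norm_num)) (cont 3 (by norm_num))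
    (hder 1 (by norm_num)) (hder 2 (by norm_num))
  -- A3 bound
  have hiii : (∫ x in (-1:ℝ)..0, (iteratedDeriv 3 f x)^2)
      ≤ 2*(∫ x in (-1:ℝ)..0, (iteratedDeriv 3 f x - (lam - a) * deriv f x)^2)
        + 2*(1+a)^2*lam^2*(∫ x in (-1:ℝ)..0, (iteratedDeriv 1 f x)^2) := by
    have hsq : (lam - a)^2 ≤ (1+a)^2*lam^2 := by
      have hl2 : (1:ℝ) ≤ lam^2 := by nlinarith
      have h2 : a^2 ≤ a^2*lam^2 := by nlinarith [mul_le_mul_of_nonneg_left hl2 (sq_nonneg a)]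
      nlinarith [h2, mul_nonneg ha (sq_nonneg lam), mul_nonneg ha (by linarith : (0:ℝ) ≤ lam)]
    have hpt : ∀ x ∈ Set.Icc (-1:ℝ) 0, (iteratedDeriv 3 f x)^2
        ≤ 2*(iteratedDeriv 3 f x - (lam - a) * deriv f x)^2
          + (2*(1+a)^2*lam^2)*(iteratedDeriv 1 f x)^2 := by
      intro x _
      have hd1 : deriv f x = iteratedDeriv 1 f x := by rw [iteratedDeriv_one]
      rw [hd1]
      nlinarith [sq_nonneg (iteratedDeriv 3 f x - 2*(lam - a)*iteratedDeriv 1 f x),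
        sq_nonneg (iteratedDeriv 1 f x), hsq,
        mul_le_mul_of_nonneg_right hsq (sq_nonneg (iteratedDeriv 1 f x))]
    have hmono : (∫ x in (-1:ℝ)..0, (iteratedDeriv 3 f x)^2)
        ≤ ∫ x in (-1:ℝ)..0, (2*(iteratedDeriv 3 f x - (lam - a) * deriv f x)^2
          + (2*(1+a)^2*lam^2)*(iteratedDeriv 1 f x)^2) := by
      apply intervalIntegral.integral_mono_on (by norm_num)
        (((cont 3 le_rfl).pow 2).intervalIntegrable _ _)
        (((continuous_const.mul (hg.pow 2)).add
          (continuous_const.mul ((cont 1 (by norm_num)).pow 2))).intervalIntegrable _ _)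
      exact hpt
    rw [intervalIntegral.integral_add (f := fun x => 2*(iteratedDeriv 3 f x - (lam - a) * deriv f x)^2)
      (g := fun x => (2*(1+a)^2*lam^2)*(iteratedDeriv 1 f x)^2)
      ((continuous_const.mul (hg.pow 2)).intervalIntegrable _ _)
      ((continuous_const.mul ((cont 1 (by norm_num)).pow 2)).intervalIntegrable _ _),
      intervalIntegral.integral_const_mul, intervalIntegral.integral_const_mul] at hmono
    calc (∫ x in (-1:ℝ)..0, (iteratedDeriv 3 f x)^2) ≤ _ := hmono
      _ = _ := by ring
  have hβ : (1:ℝ) ≤ (1+a)^2 := by nlinarith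
  exact base_arith (hnn 0 (by norm_num)) (hnn 1 (by norm_num)) (hnn 2 (by norm_num))
    (hnn 3 le_rfl) hGnn hβ hlam hi hii hiii

lemma cd_mono {m k : ℕ} {f : ℝ → ℝ} (h : ContDiff ℝ (k:ℕ) f) (hmk : m ≤ k) :
    ContDiff ℝ (m:ℕ) f := h.of_le (by exact_mod_cast hmk)

lemma itd_comp (k j : ℕ) (f : ℝ → ℝ) :
    iteratedDeriv k (iteratedDeriv j f) = iteratedDeriv (k+j) f := by
  simp only [iteratedDeriv_eq_iterate]
  exact (Function.iterate_add_apply deriv k j f).symm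

lemma cd_itd {m k : ℕ} {f : ℝ → ℝ} (h : ContDiff ℝ (m+k:ℕ) f) :
    ContDiff ℝ (m:ℕ) (iteratedDeriv k f) := by
  rw [iteratedDeriv_eq_iterate]
  exact ContDiff.iterate_deriv' m k h

lemma itd_sub {k : ℕ} {F G : ℝ → ℝ} (hF : ContDiff ℝ (k:ℕ) F) (hG : ContDiff ℝ (k:ℕ) G) (x : ℝ) :
    iteratedDeriv k (fun y => F y - G y) x = iteratedDeriv k F x - iteratedDeriv k G x := by
  have h := iteratedDerivWithin_sub (Set.mem_univ x) uniqueDiffOn_univ hF.contDiffWithinAt hG.contDiffWithinAt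
  simp only [iteratedDerivWithin_univ] at h
  exact h

lemma itd_P {μ : ℝ} {f : ℝ → ℝ} (k : ℕ) (hf : ContDiff ℝ (k+3:ℕ) f) (x : ℝ) :
    iteratedDeriv k (fun y => iteratedDeriv 3 f y - μ * deriv f y) x
      = iteratedDeriv (k+3) f x - μ * iteratedDeriv (k+1) f x := by
  have h3 : ContDiff ℝ (k:ℕ) (iteratedDeriv 3 f) := cd_itd (by exact_mod_cast hf)
  have h1 : ContDiff ℝ (k:ℕ) (deriv f) := by
    have : ContDiff ℝ (k+1:ℕ) f := cd_mono hf (by omega)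
    have h := cd_itd (f := f) (m := k) (k := 1) (by exact_mod_cast this)
    rwa [iteratedDeriv_one] at h
  have e1 : iteratedDeriv k (fun y => iteratedDeriv 3 f y - μ * deriv f y) x
      = iteratedDeriv k (iteratedDeriv 3 f) x - iteratedDeriv k (fun y => μ * deriv f y) x := by
    exact itd_sub h3 (contDiff_const.mul h1) x
  have e2 : iteratedDeriv k (iteratedDeriv 3 f) x = iteratedDeriv (k+3) f x := by
    rw [itd_comp]
  have e3 : iteratedDeriv k (fun y => μ * deriv f y) x = μ * iteratedDeriv (k+1) f x := by
    have := iteratedDerivWithin_const_mul (Set.mem_univ x) uniqueDiffOn_univ μ h1.contDiffWithinAt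
      (n := k)
    simp only [iteratedDerivWithin_univ] at this
    rw [this]
    congr 1
    have := itd_comp k 1 f
    rw [iteratedDeriv_one] at this
    rw [this]
  rw [e1, e2, e3]

lemma cd_P {μ : ℝ} {m : ℕ} {f : ℝ → ℝ} (hf : ContDiff ℝ (m+3:ℕ) f) :
    ContDiff ℝ (m:ℕ) (fun y => iteratedDeriv 3 f y - μ * deriv f y) := by
  have h3 : ContDiff ℝ (m:ℕ) (iteratedDeriv 3 f) := cd_itd (by exact_mod_cast hf)
  have h1 : ContDiff ℝ (m:ℕ) (deriv f) := by
    have : ContDiff ℝ (m+1:ℕ) f := cd_mono hf (by omega)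
    have h := cd_itd (f := f) (m := m) (k := 1) (by exact_mod_cast this)
    rwa [iteratedDeriv_one] at h
  exact h3.sub (contDiff_const.mul h1)

noncomputable def Snorm (n : ℕ) (f : ℝ → ℝ) : ℝ :=
  ∑ m ∈ Finset.range (2*n+1), ∫ x in (-1:ℝ)..0, (iteratedDeriv m f x)^2

lemma Snorm_nonneg (n : ℕ) (f : ℝ → ℝ) : 0 ≤ Snorm n f :=
  Finset.sum_nonneg fun m _ =>
    intervalIntegral.integral_nonneg (by norm_num) (fun x _ => sq_nonneg _)

lemma term_le_Snorm (n : ℕ) (f : ℝ → ℝ) {k : ℕ} (hk : k < 2*n+1) :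
    (∫ x in (-1:ℝ)..0, (iteratedDeriv k f x)^2) ≤ Snorm n f :=
  Finset.single_le_sum
    (f := fun m => ∫ x in (-1:ℝ)..0, (iteratedDeriv m f x)^2)
    (fun m _ => intervalIntegral.integral_nonneg (by norm_num) (fun x _ => sq_nonneg _))
    (Finset.mem_range.mpr hk)

lemma Abound {a lam : ℝ} (hμsq : (lam-a)^2 ≤ (1+a)^2*lam^2) (k : ℕ) {f : ℝ → ℝ}
    (hf : ContDiff ℝ (k+3:ℕ) f) :
    (∫ x in (-1:ℝ)..0, (iteratedDeriv (k+3) f x)^2)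
      ≤ 2*(∫ x in (-1:ℝ)..0,
            (iteratedDeriv k (fun y => iteratedDeriv 3 f y - (lam-a) * deriv f y) x)^2)
        + 2*(1+a)^2*lam^2*(∫ x in (-1:ℝ)..0, (iteratedDeriv (k+1) f x)^2) := by
  have hc3 : Continuous (iteratedDeriv (k+3) f) :=
    hf.continuous_iteratedDeriv (k+3) (by exact_mod_cast le_rfl)
  have hc1 : Continuous (iteratedDeriv (k+1) f) :=
    hf.continuous_iteratedDeriv (k+1) (by exact_mod_cast (by omega : k+1 ≤ k+3))
  have hcP : Continuous (iteratedDeriv k (fun y => iteratedDeriv 3 f y - (lam-a) * deriv f y)) :=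
    (cd_P hf).continuous_iteratedDeriv k (by exact_mod_cast le_rfl)
  have hpt : ∀ x ∈ Set.Icc (-1:ℝ) 0, (iteratedDeriv (k+3) f x)^2
      ≤ 2*(iteratedDeriv k (fun y => iteratedDeriv 3 f y - (lam-a) * deriv f y) x)^2
        + (2*(1+a)^2*lam^2)*(iteratedDeriv (k+1) f x)^2 := by
    intro x _
    have hid := itd_P (μ := lam - a) k hf x
    have : iteratedDeriv (k+3) f x
        = iteratedDeriv k (fun y => iteratedDeriv 3 f y - (lam-a) * deriv f y) x
          + (lam-a) * iteratedDeriv (k+1) f x := by rw [hid]; ring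
    rw [this]
    nlinarith [sq_nonneg (iteratedDeriv k (fun y => iteratedDeriv 3 f y - (lam-a) * deriv f y) x
        - (lam-a) * iteratedDeriv (k+1) f x),
      mul_le_mul_of_nonneg_right hμsq (sq_nonneg (iteratedDeriv (k+1) f x))]
  have hmono := intervalIntegral.integral_mono_on (μ := volume) (by norm_num : (-1:ℝ) ≤ 0)
    ((hc3.pow 2).intervalIntegrable _ _)
    (((continuous_const.mul (hcP.pow 2)).add
      (continuous_const.mul (hc1.pow 2))).intervalIntegrable _ _) hpt
  simp only [Pi.add_apply, Pi.mul_apply, Pi.pow_apply] at hmono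
  rw [intervalIntegral.integral_add
    (f := fun x => 2*(iteratedDeriv k (fun y => iteratedDeriv 3 f y - (lam-a) * deriv f y) x)^2)
    (g := fun x => (2*(1+a)^2*lam^2)*(iteratedDeriv (k+1) f x)^2)
    ((continuous_const.mul (hcP.pow 2)).intervalIntegrable _ _)
    ((continuous_const.mul (hc1.pow 2)).intervalIntegrable _ _),
    intervalIntegral.integral_const_mul, intervalIntegral.integral_const_mul] at hmono
  calc (∫ x in (-1:ℝ)..0, (iteratedDeriv (k+3) f x)^2) ≤ _ := hmono
    _ = _ := by ring

lemma step_ge2 {a lam : ℝ} (hμsq : (lam-a)^2 ≤ (1+a)^2*lam^2) (hβ : (1:ℝ) ≤ (1+a)^2)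
    (hlam : (0:ℝ) ≤ lam) (m : ℕ) {f : ℝ → ℝ} (hf : ContDiff ℝ (2*m+4:ℕ) f) :
    Snorm (m+2) f ≤ Snorm (m+1) f
      + 4*Snorm (m+1) (fun y => iteratedDeriv 3 f y - (lam-a) * deriv f y)
      + 4*(1+a)^2*lam^2*Snorm (m+1) f := by
  have hsplit : Snorm (m+2) f = Snorm (m+1) f
      + (∫ x in (-1:ℝ)..0, (iteratedDeriv (2*m+3) f x)^2)
      + (∫ x in (-1:ℝ)..0, (iteratedDeriv (2*m+4) f x)^2) := by
    unfold Snorm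
    rw [show 2*(m+2)+1 = (2*m+3)+1+1 from by omega]
    rw [Finset.sum_range_succ, Finset.sum_range_succ]
    rw [show 2*(m+1)+1 = 2*m+3 from by omega]
  have hb1 := Abound hμsq (2*m+1) (by rw [show 2*m+1+3 = 2*m+4 from by omega]; exact hf)
  have hb2 := Abound hμsq (2*m) (cd_mono (k := 2*m+4) hf (by omega))
  rw [show 2*m+1+3 = 2*m+4 from by omega, show 2*m+1+1 = 2*m+2 from by omega] at hb1
  rw [show 2*m+3 = 2*m+3 from rfl] at hb2
  have hB1 := term_le_Snorm (m+1) (fun y => iteratedDeriv 3 f y - (lam-a) * deriv f y)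
    (k := 2*m+1) (by omega)
  have hB2 := term_le_Snorm (m+1) (fun y => iteratedDeriv 3 f y - (lam-a) * deriv f y)
    (k := 2*m) (by omega)
  have hA1 := term_le_Snorm (m+1) f (k := 2*m+1) (by omega)
  have hA2 := term_le_Snorm (m+1) f (k := 2*m+2) (by omega)
  have hfac : (0:ℝ) ≤ (1+a)^2*lam^2 := by positivity
  rw [hsplit]
  have h23 : (∫ x in (-1:ℝ)..0, (iteratedDeriv (2*m+3) f x)^2)
      ≤ 2*Snorm (m+1) (fun y => iteratedDeriv 3 f y - (lam-a) * deriv f y)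
        + 2*(1+a)^2*lam^2*Snorm (m+1) f := by
    have e := mul_le_mul_of_nonneg_left hA1 (by positivity : (0:ℝ) ≤ 2*(1+a)^2*lam^2)
    nlinarith [hb2, hB2]
  have h24 : (∫ x in (-1:ℝ)..0, (iteratedDeriv (2*m+4) f x)^2)
      ≤ 2*Snorm (m+1) (fun y => iteratedDeriv 3 f y - (lam-a) * deriv f y)
        + 2*(1+a)^2*lam^2*Snorm (m+1) f := by
    have e := mul_le_mul_of_nonneg_left hA2 (by positivity : (0:ℝ) ≤ 2*(1+a)^2*lam^2)
    nlinarith [hb1, hB1]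
  linarith


lemma hmusq {a lam : ℝ} (ha : 0 ≤ a) (hlam : 9 ≤ lam) : (lam - a)^2 ≤ (1+a)^2*lam^2 := by
  have hl2 : (1:ℝ) ≤ lam^2 := by nlinarith
  have h2 : a^2 ≤ a^2*lam^2 := by nlinarith [mul_le_mul_of_nonneg_left hl2 (sq_nonneg a)]
  nlinarith [h2, mul_nonneg ha (sq_nonneg lam), mul_nonneg ha (by linarith : (0:ℝ) ≤ lam)]

lemma main_ind (a lam : ℝ) (ha : 0 ≤ a) (hlam : 9 ≤ lam) :
    ∀ n : ℕ, ∀ f : ℝ → ℝ, ContDiff ℝ (3*n:ℕ) f →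
      Snorm n f ≤ (2*10^11*(1+a)^4)^n *
        ∑ i ∈ Finset.range (n+1), lam^(2*n-2*i) *
          (∫ x in (-1:ℝ)..0,
            (((fun h : ℝ → ℝ => fun x => iteratedDeriv 3 h x - (lam - a) * deriv h x)^[i] f) x)^2) := by
  obtain ⟨P, hP⟩ : ∃ P : (ℝ → ℝ) → (ℝ → ℝ),
      P = fun h : ℝ → ℝ => fun x => iteratedDeriv 3 h x - (lam - a) * deriv h x := ⟨_, rfl⟩
  rw [← hP]
  obtain ⟨K, hK⟩ : ∃ K : ℝ, K = 10^11*(1+a)^4 := ⟨_, rfl⟩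
  have hK1 : (1:ℝ) ≤ K := by rw [hK]; nlinarith [sq_nonneg a, sq_nonneg (1+a), sq_nonneg ((1+a)^2)]
  have hC : (2*10^11*(1+a)^4) = 2*K := by rw [hK]; ring
  rw [hC]
  have hβ : (1:ℝ) ≤ (1+a)^2 := by nlinarith
  have hsq := hmusq ha hlam
  -- nonnegativity of T-terms
  have hTterm : ∀ (g : ℝ → ℝ) (i : ℕ) (e : ℕ), 0 ≤ lam^e * ∫ x in (-1:ℝ)..0, ((P^[i] g) x)^2 := by
    intro g i e
    have h1 : (0:ℝ) ≤ lam := by linarith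
    have h2 : 0 ≤ ∫ x in (-1:ℝ)..0, ((P^[i] g) x)^2 :=
      intervalIntegral.integral_nonneg (by norm_num) (fun x _ => sq_nonneg _)
    positivity
  -- the one-step inequality
  have step : ∀ n : ℕ, ∀ f : ℝ → ℝ, ContDiff ℝ (3*(n+1):ℕ) f →
      Snorm (n+1) f ≤ K * (lam^2 * Snorm n f + Snorm n (P f)) := by
    intro n f hf
    match n with
    | 0 =>
      have hf3 : ContDiff ℝ (3:ℕ) f := by
        have : (3*(0+1)) = 3 := by norm_num
        rwa [this] at hf
      have hb := base_case ha hlam hf3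
      have e1 : Snorm 1 f = (∫ x in (-1:ℝ)..0, (iteratedDeriv 0 f x)^2)
          + (∫ x in (-1:ℝ)..0, (iteratedDeriv 1 f x)^2)
          + (∫ x in (-1:ℝ)..0, (iteratedDeriv 2 f x)^2) := by
        unfold Snorm
        rw [show 2*1+1 = 3 from rfl]
        rw [Finset.sum_range_succ, Finset.sum_range_succ, Finset.sum_range_succ,
          Finset.sum_range_zero]
        ring
      have e2 : Snorm 0 f = ∫ x in (-1:ℝ)..0, (iteratedDeriv 0 f x)^2 := by
        unfold Snorm
        rw [show 2*0+1 = 1 from rfl, Finset.sum_range_succ, Finset.sum_range_zero]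
        ring
      have e3 : Snorm 0 (P f) = ∫ x in (-1:ℝ)..0, (iteratedDeriv 3 f x - (lam - a) * deriv f x)^2 := by
        unfold Snorm
        rw [show 2*0+1 = 1 from rfl, Finset.sum_range_succ, Finset.sum_range_zero]
        rw [hP]
        simp [iteratedDeriv_zero]
      rw [e1, e2, e3, hK]
      calc _ ≤ (10^11*((1+a)^2)^2) * (lam^2*(∫ x in (-1:ℝ)..0, (iteratedDeriv 0 f x)^2)
          + ∫ x in (-1:ℝ)..0, (iteratedDeriv 3 f x - (lam - a) * deriv f x)^2) := hb
        _ = _ := by ring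
    | (m+1) =>
      have hf' : ContDiff ℝ (2*m+4:ℕ) f := by
        apply cd_mono (k := 3*(m+2)) _ (by omega)
        have : (3*(m+1+1)) = 3*(m+2) := by omega
        rwa [this] at hf
      have hs := step_ge2 hsq hβ (by linarith) m hf'
      have hPf : (fun y => iteratedDeriv 3 f y - (lam-a) * deriv f y) = P f := by rw [hP]
      rw [hPf] at hs
      have hS0 := Snorm_nonneg (m+1) f
      have hS1 := Snorm_nonneg (m+1) (P f)
      have h1 : Snorm (m+1) f + 4*(1+a)^2*lam^2*Snorm (m+1) f ≤ K * (lam^2 * Snorm (m+1) f) := by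
        have hl2 : (1:ℝ) ≤ lam^2 := by nlinarith
        have hKβ : 5*(1+a)^2 ≤ K := by rw [hK]; nlinarith [sq_nonneg (1+a), sq_nonneg ((1+a)^2)]
        have t1 : Snorm (m+1) f ≤ lam^2 * Snorm (m+1) f := by
          nlinarith [mul_le_mul_of_nonneg_right hl2 hS0]
        have t2 : 4*(1+a)^2*lam^2*Snorm (m+1) f + lam^2*Snorm (m+1) f
            ≤ K*(lam^2*Snorm (m+1) f) := by
          have hx : (0:ℝ) ≤ lam^2*Snorm (m+1) f := by positivity
          nlinarith [mul_le_mul_of_nonneg_right hKβ hx]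
        linarith
      have h2 : 4*Snorm (m+1) (P f) ≤ K * Snorm (m+1) (P f) := by
        have hK4 : (4:ℝ) ≤ K := by
          rw [hK]
          nlinarith [sq_nonneg ((1+a)^2), sq_nonneg (1+a), sq_nonneg a]
        nlinarith [mul_le_mul_of_nonneg_right hK4 hS1]
      linarith
  -- main induction
  intro n
  induction n with
  | zero =>
    intro f hf
    apply le_of_eq
    unfold Snorm
    simp
  | succ n ih =>
    intro f hf
    have hf3n : ContDiff ℝ (3*n:ℕ) f := cd_mono (k := 3*(n+1)) hf (by omega)
    have hfP : ContDiff ℝ (3*n:ℕ) (P f) := by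
      rw [hP]
      apply cd_P
      have : (3*(n+1)) = 3*n+3 := by omega
      rwa [this] at hf
    have ih_f := ih f hf3n
    have ih_P := ih (P f) hfP
    have hstep := step n f hf
    -- abbreviations
    obtain ⟨Tf, hTf⟩ : ∃ t : ℝ, t = ∑ i ∈ Finset.range (n+1), lam^(2*n-2*i) *
        (∫ x in (-1:ℝ)..0, ((P^[i] f) x)^2) := ⟨_, rfl⟩
    obtain ⟨TP, hTP⟩ : ∃ t : ℝ, t = ∑ i ∈ Finset.range (n+1), lam^(2*n-2*i) *
        (∫ x in (-1:ℝ)..0, ((P^[i] (P f)) x)^2) := ⟨_, rfl⟩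
    obtain ⟨T1, hT1⟩ : ∃ t : ℝ, t = ∑ i ∈ Finset.range (n+1+1), lam^(2*(n+1)-2*i) *
        (∫ x in (-1:ℝ)..0, ((P^[i] f) x)^2) := ⟨_, rfl⟩
    rw [← hTf] at ih_f
    rw [← hTP] at ih_P
    rw [← hT1]
    have hTf0 : 0 ≤ Tf := by
      rw [hTf]; exact Finset.sum_nonneg fun i _ => hTterm f i _
    have hTP0 : 0 ≤ TP := by
      rw [hTP]; exact Finset.sum_nonneg fun i _ => hTterm (P f) i _
    -- λ² Tf ≤ T1
    have hcomp1 : lam^2 * Tf ≤ T1 := by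
      rw [hTf, hT1, Finset.mul_sum]
      have e : ∀ i ∈ Finset.range (n+1), lam^2 * (lam^(2*n-2*i) *
          (∫ x in (-1:ℝ)..0, ((P^[i] f) x)^2))
          = lam^(2*(n+1)-2*i) * (∫ x in (-1:ℝ)..0, ((P^[i] f) x)^2) := by
        intro i hi
        have hi' : i ≤ n := by have := Finset.mem_range.mp hi; omega
        have he : 2*(n+1)-2*i = (2*n-2*i)+2 := by omega
        rw [he, pow_add]
        ring
      rw [Finset.sum_congr rfl e]
      exact Finset.sum_le_sum_of_subset_of_nonneg
        (Finset.range_subset_range.mpr (by omega)) (fun i _ _ => hTterm f i _)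
    -- TP ≤ T1
    have hcomp2 : TP ≤ T1 := by
      have e : ∀ i ∈ Finset.range (n+1), lam^(2*(n+1)-2*(i+1)) *
          (∫ x in (-1:ℝ)..0, ((P^[i+1] f) x)^2)
          = lam^(2*n-2*i) * (∫ x in (-1:ℝ)..0, ((P^[i] (P f)) x)^2) := by
        intro i hi
        have hi' : i ≤ n := by have := Finset.mem_range.mp hi; omega
        have he : 2*(n+1)-2*(i+1) = 2*n-2*i := by omega
        rw [he, Function.iterate_succ_apply]
      have h1 : T1 = (∑ i ∈ Finset.range (n+1), lam^(2*(n+1)-2*(i+1)) *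
          (∫ x in (-1:ℝ)..0, ((P^[i+1] f) x)^2))
          + lam^(2*(n+1)-2*0) * (∫ x in (-1:ℝ)..0, ((P^[0] f) x)^2) := by
        rw [hT1]
        exact Finset.sum_range_succ' _ _
      rw [hTP, h1, Finset.sum_congr rfl e]
      have := hTterm f 0 (2*(n+1)-2*0)
      linarith
    -- combine
    have hKn : (0:ℝ) ≤ (2*K)^n := by positivity
    have hK0 : (0:ℝ) ≤ K := by linarith
    calc Snorm (n+1) f ≤ K * (lam^2 * Snorm n f + Snorm n (P f)) := hstep
      _ ≤ K * (lam^2 * ((2*K)^n * Tf) + (2*K)^n * TP) := by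
          have hl2 : (0:ℝ) ≤ lam^2 := sq_nonneg _
          have m1 := mul_le_mul_of_nonneg_left ih_f hl2
          have := mul_le_mul_of_nonneg_left (add_le_add m1 ih_P) hK0
          linarith [this]
      _ = K * (2*K)^n * (lam^2 * Tf + TP) := by ring
      _ ≤ K * (2*K)^n * (T1 + T1) := by
          apply mul_le_mul_of_nonneg_left _ (by positivity)
          linarith
      _ = (2*K)^(n+1) * T1 := by ring

theorem sobolev_norm_le_powers_of_P (a : ℝ) (ha : 0 ≤ a) :
    ∃ C₁ : ℝ, 1 ≤ C₁ ∧ ∀ n j : ℕ, 1 ≤ j → ∀ f : ℝ → ℝ, ContDiff ℝ (3*n : ℕ) f →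
      ∑ m ∈ Finset.range (2*n+1), (∫ x in (-1:ℝ)..0, (iteratedDeriv m f x)^2) ≤
        C₁^n * ∑ i ∈ Finset.range (n+1),
          (((j : ℝ) * Real.pi)^2)^(2*n - 2*i) *
            (∫ x in (-1:ℝ)..0,
              (((fun h : ℝ → ℝ => fun x =>
                  iteratedDeriv 3 h x - (((j : ℝ) * Real.pi)^2 - a) * deriv h x)^[i] f) x)^2) := by
  refine ⟨2*10^11*(1+a)^4, ?_, ?_⟩
  · nlinarith [sq_nonneg ((1+a)^2), sq_nonneg (1+a), sq_nonneg a]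
  · intro n j hj f hf
    have hj1 : (1:ℝ) ≤ (j:ℝ) := by exact_mod_cast hj
    have hpi : (3:ℝ) < Real.pi := Real.pi_gt_three
    have hπ0 : (0:ℝ) < Real.pi := by linarith
    have h3 : (3:ℝ) ≤ (j:ℝ) * Real.pi := by
      nlinarith [mul_nonneg (sub_nonneg.mpr hj1) hπ0.le]
    have hlam : (9:ℝ) ≤ ((j:ℝ) * Real.pi)^2 := by nlinarith
    exact main_ind a (((j:ℝ) * Real.pi)^2) ha hlam n f hf
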